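/- arXiv:1501.04925 — 5 statements merged into one kernel-verified Lean document; each statement's English description precedes it below -/
import Mathlib

section
/- Consider the discrete-time linear time-varying system x_{t+1} = A_t x_t + B_t u_t + C_t a_t with time horizon T and adversary constraint set Adv = { a = (a_0,…,a_{T-1}) : Σ_{s=0}^{T-1} ‖a_s‖² ≤ b } for a budget b ≥ 0. Fix a time t ∈ {0,…,T}, an initial state x_0 ∈ ℝ^n and a control sequence u. If the adversary controllability Gramian W_t = Σ_{s=0}^{t-1} α(t,s+1) C_s C_sᵀ α(t,s+1)ᵀ is invertible, then the reachable set at time t over all admissible adversary inputs decomposes exactly as Reach(x_0, u, Adv, t) = { ξ(x_0, u, 0, t) } ⊕ { x ∈ ℝ^n : xᵀ W_t^{-1} x ≤ b }; that is, the adversary leverage at time t is exactly the ellipsoid { x : xᵀ W_t^{-1} x ≤ b }, independent of x_0 and u. -/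
open Finset Matrix Pointwise

noncomputable section

/-- Transition matrix `α(t₁, t₀)`: `α(t₀,t₀) = I`, `α(t₁+1,t₀) = A t₁ * α(t₁,t₀)`. -/
def transMat {n : ℕ} (A : ℕ → Matrix (Fin n) (Fin n) ℝ) : ℕ → ℕ → Matrix (Fin n) (Fin n) ℝ
  | 0, _ => 1
  | t + 1, t0 => if t + 1 ≤ t0 then 1 else A t * transMat A t t0

/-- State `x_t` of the system `x_{t+1} = A_t x_t + B_t u_t + C_t a_t`. -/
def traj {n m l : ℕ} (A : ℕ → Matrix (Fin n) (Fin n) ℝ)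
    (B : ℕ → Matrix (Fin n) (Fin m) ℝ) (C : ℕ → Matrix (Fin n) (Fin l) ℝ)
    (x0 : EuclideanSpace ℝ (Fin n)) (u : ℕ → EuclideanSpace ℝ (Fin m))
    (a : ℕ → EuclideanSpace ℝ (Fin l)) : ℕ → EuclideanSpace ℝ (Fin n)
  | 0 => x0
  | t + 1 => WithLp.toLp 2 ((A t).mulVec (traj A B C x0 u a t) + (B t).mulVec (u t) + (C t).mulVec (a t))

namespace AdvAux

lemma sum_mulVec' {n k : ℕ} (F : Finset ℕ) (M : ℕ → Matrix (Fin n) (Fin k) ℝ) (v : Fin k → ℝ) :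
    (∑ s ∈ F, M s) *ᵥ v = ∑ s ∈ F, M s *ᵥ v := by
  ext i
  simp [Matrix.mulVec, dotProduct, Finset.sum_apply, Matrix.sum_apply, Finset.sum_mul]
  rw [Finset.sum_comm]

lemma mulVec_sum' {n k : ℕ} (F : Finset ℕ) (M : Matrix (Fin n) (Fin k) ℝ) (v : ℕ → Fin k → ℝ) :
    M *ᵥ (∑ s ∈ F, v s) = ∑ s ∈ F, M *ᵥ v s := by
  ext i
  simp [Matrix.mulVec, dotProduct, Finset.sum_apply, Finset.mul_sum]
  rw [Finset.sum_comm]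

lemma dot_sum' {n : ℕ} (F : Finset ℕ) (y : Fin n → ℝ) (v : ℕ → Fin n → ℝ) :
    y ⬝ᵥ (∑ s ∈ F, v s) = ∑ s ∈ F, y ⬝ᵥ v s := by
  simp [dotProduct, Finset.sum_apply, Finset.mul_sum]
  rw [Finset.sum_comm]

lemma norm_sq_eq_dot {l : ℕ} (v : EuclideanSpace ℝ (Fin l)) : ‖v‖ ^ 2 = v ⬝ᵥ v := by
  rw [← real_inner_self_eq_norm_sq]
  simp only [PiLp.inner_apply, RCLike.inner_apply, conj_trivial, dotProduct, mul_comm]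

lemma transMat_succ {n : ℕ} (A : ℕ → Matrix (Fin n) (Fin n) ℝ) (t t0 : ℕ) :
    transMat A (t + 1) t0 = if t + 1 ≤ t0 then 1 else A t * transMat A t t0 := rfl

/-- Superposition: trajectory = adversary-free trajectory + linear response.
Stated with plain `Fin n → ℝ` addition. -/
lemma traj_superpose {n m l : ℕ} (A : ℕ → Matrix (Fin n) (Fin n) ℝ)
    (B : ℕ → Matrix (Fin n) (Fin m) ℝ) (C : ℕ → Matrix (Fin n) (Fin l) ℝ)
    (x0 : EuclideanSpace ℝ (Fin n)) (u : ℕ → EuclideanSpace ℝ (Fin m))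
    (a : ℕ → EuclideanSpace ℝ (Fin l)) (t : ℕ) :
    traj A B C x0 u a t =
      @HAdd.hAdd (Fin n → ℝ) (Fin n → ℝ) (Fin n → ℝ) instHAdd
        (traj A B C x0 u (fun _ => 0) t)
        (∑ s ∈ Finset.range t, (transMat A t (s + 1) * C s) *ᵥ (a s)) := by
  induction t with
  | zero => simp [traj]
  | succ t ih =>
    have htrans : ∀ s < t, transMat A (t + 1) (s + 1) = A t * transMat A t (s + 1) := by
      intro s hs
      rw [transMat_succ, if_neg (by omega)]
    have htt : transMat A (t + 1) (t + 1) = 1 := by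
      rw [transMat_succ, if_pos le_rfl]
    have hL : ((A t) *ᵥ (traj A B C x0 u a t) + (B t) *ᵥ (u t) + (C t) *ᵥ (a t) :
        Fin n → ℝ) = traj A B C x0 u a (t + 1) := by simp [traj]
    have hR : ((A t) *ᵥ (traj A B C x0 u (fun _ => 0) t) + (B t) *ᵥ (u t) +
        (C t) *ᵥ (0 : Fin l → ℝ) : Fin n → ℝ) = traj A B C x0 u (fun _ => 0) (t + 1) := rfl
    have hsum : (∑ s ∈ Finset.range (t + 1), (transMat A (t + 1) (s + 1) * C s) *ᵥ (a s) :
        Fin n → ℝ) =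
        (∑ s ∈ Finset.range t, (A t) *ᵥ ((transMat A t (s + 1) * C s) *ᵥ (a s))) +
          (C t) *ᵥ (a t) := by
      rw [Finset.sum_range_succ]
      congr 1
      · refine Finset.sum_congr rfl fun s hs => ?_
        rw [htrans s (Finset.mem_range.mp hs), Matrix.mulVec_mulVec, ← Matrix.mul_assoc]
      · rw [htt, Matrix.one_mul]
    rw [← hL, ← hR, hsum, ih, Matrix.mulVec_zero, Matrix.mulVec_add, mulVec_sum']
    abel

end AdvAux

open AdvAux

/-- The reachable set at time `t ≤ T` over all budget-`b` adversary inputs is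
exactly the adversary-free state plus the Gramian ellipsoid (the adversary
leverage), which is independent of `x₀` and `u`. -/
theorem adversary_leverage {n m l : ℕ} (A : ℕ → Matrix (Fin n) (Fin n) ℝ)
    (B : ℕ → Matrix (Fin n) (Fin m) ℝ) (C : ℕ → Matrix (Fin n) (Fin l) ℝ)
    (T : ℕ) (b : ℝ) (hb : 0 ≤ b) (t : ℕ) (ht : t ≤ T)
    (x0 : EuclideanSpace ℝ (Fin n)) (u : ℕ → EuclideanSpace ℝ (Fin m))
    (W : Matrix (Fin n) (Fin n) ℝ)
    (hW : W = ∑ s ∈ Finset.range t,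
        transMat A t (s + 1) * C s * (C s)ᵀ * (transMat A t (s + 1))ᵀ)
    (hWinv : IsUnit W) :
    {x : EuclideanSpace ℝ (Fin n) |
        ∃ a : ℕ → EuclideanSpace ℝ (Fin l),
          (∑ s ∈ Finset.range T, ‖a s‖ ^ 2) ≤ b ∧ x = traj A B C x0 u a t} =
      {traj A B C x0 u (fun _ => 0) t} +
        {x : EuclideanSpace ℝ (Fin n) | x ⬝ᵥ (W⁻¹).mulVec x ≤ b} := by
  set M : ℕ → Matrix (Fin n) (Fin l) ℝ := fun s => transMat A t (s + 1) * C s with hM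
  have hWM : W = ∑ s ∈ Finset.range t, M s * (M s)ᵀ := by
    rw [hW]
    exact Finset.sum_congr rfl fun s _ => by
      simp [hM, Matrix.transpose_mul, Matrix.mul_assoc]
  have hdet : IsUnit W.det := (Matrix.isUnit_iff_isUnit_det W).mp hWinv
  have hWW : W * W⁻¹ = 1 := Matrix.mul_nonsing_inv W hdet
  -- attainment facts
  have hattain : ∀ z : Fin n → ℝ,
      (∑ s ∈ Finset.range t, M s *ᵥ ((M s)ᵀ *ᵥ (W⁻¹ *ᵥ z))) = z ∧
      (∑ s ∈ Finset.range t, ((M s)ᵀ *ᵥ (W⁻¹ *ᵥ z)) ⬝ᵥ ((M s)ᵀ *ᵥ (W⁻¹ *ᵥ z)))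
        = z ⬝ᵥ (W⁻¹ *ᵥ z) := by
    intro z
    constructor
    · have h1 : (∑ s ∈ Finset.range t, M s *ᵥ ((M s)ᵀ *ᵥ (W⁻¹ *ᵥ z))) =
          (∑ s ∈ Finset.range t, M s * (M s)ᵀ) *ᵥ (W⁻¹ *ᵥ z) := by
        rw [sum_mulVec']
        exact Finset.sum_congr rfl fun s _ => (Matrix.mulVec_mulVec _ _ _)
      rw [h1, ← hWM, Matrix.mulVec_mulVec, hWW, Matrix.one_mulVec]
    · have h1 : ∀ s, ((M s)ᵀ *ᵥ (W⁻¹ *ᵥ z)) ⬝ᵥ ((M s)ᵀ *ᵥ (W⁻¹ *ᵥ z)) =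
          (W⁻¹ *ᵥ z) ⬝ᵥ ((M s * (M s)ᵀ) *ᵥ (W⁻¹ *ᵥ z)) := by
        intro s
        rw [Matrix.dotProduct_mulVec, Matrix.vecMul_transpose, Matrix.mulVec_mulVec,
          dotProduct_comm]
      simp only [h1]
      rw [← dot_sum', ← sum_mulVec', ← hWM, Matrix.mulVec_mulVec, hWW, Matrix.one_mulVec,
        dotProduct_comm]
  -- optimality
  have hopt : ∀ (a : ℕ → EuclideanSpace ℝ (Fin l)),
      (∑ s ∈ Finset.range t, M s *ᵥ (a s)) ⬝ᵥ (W⁻¹ *ᵥ (∑ s ∈ Finset.range t, M s *ᵥ (a s)))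
        ≤ ∑ s ∈ Finset.range t, ‖a s‖ ^ 2 := by
    intro a
    set z : Fin n → ℝ := ∑ s ∈ Finset.range t, M s *ᵥ (a s) with hz
    set y : Fin n → ℝ := W⁻¹ *ᵥ z with hy
    set astar : ℕ → Fin l → ℝ := fun s => (M s)ᵀ *ᵥ y with hastar
    obtain ⟨hat1, hat2⟩ := hattain z
    have hcross : (∑ s ∈ Finset.range t, astar s ⬝ᵥ (a s)) = y ⬝ᵥ z := by
      have h2 : ∀ s, astar s ⬝ᵥ (a s) = y ⬝ᵥ (M s *ᵥ (a s)) := by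
        intro s
        rw [hastar]
        simp only
        rw [Matrix.dotProduct_mulVec, Matrix.mulVec_transpose]
      simp only [h2]
      rw [← dot_sum', ← hz]
    have hexpand : ∀ s, (fun i => a s i - astar s i) ⬝ᵥ (fun i => a s i - astar s i) =
        (a s) ⬝ᵥ (a s) - 2 * (astar s ⬝ᵥ (a s)) + astar s ⬝ᵥ astar s := by
      intro s
      simp only [dotProduct, Finset.mul_sum, ← Finset.sum_sub_distrib,
        ← Finset.sum_add_distrib]
      exact Finset.sum_congr rfl fun i _ => by ring
    have hexp : (∑ s ∈ Finset.range t, ‖a s‖ ^ 2) - z ⬝ᵥ y =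
        ∑ s ∈ Finset.range t, (fun i => a s i - astar s i) ⬝ᵥ (fun i => a s i - astar s i) := by
      rw [Finset.sum_congr rfl (fun s _ => hexpand s), Finset.sum_add_distrib,
        Finset.sum_sub_distrib, ← Finset.mul_sum, hcross, hat2]
      have hn : ∀ s ∈ Finset.range t, ‖a s‖ ^ 2 = (a s) ⬝ᵥ (a s) :=
        fun s _ => norm_sq_eq_dot _
      rw [Finset.sum_congr rfl hn, dotProduct_comm z y]
      ring
    have hnn : 0 ≤ (∑ s ∈ Finset.range t, ‖a s‖ ^ 2) - z ⬝ᵥ y := by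
      rw [hexp]
      exact Finset.sum_nonneg fun s _ =>
        Finset.sum_nonneg fun i _ => mul_self_nonneg _
    linarith
  -- the set equality
  ext x
  simp only [Set.mem_setOf_eq, Set.mem_add, Set.mem_singleton_iff]
  constructor
  · rintro ⟨a, hab, rfl⟩
    refine ⟨traj A B C x0 u (fun _ => 0) t, rfl,
      WithLp.toLp 2 (∑ s ∈ Finset.range t, M s *ᵥ (a s)), ?_, ?_⟩
    · refine le_trans (hopt a) (le_trans ?_ hab)
      exact Finset.sum_le_sum_of_subset_of_nonneg (Finset.range_subset_range.mpr ht)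
        (fun s _ _ => sq_nonneg _)
    · exact WithLp.ofLp_injective 2 (traj_superpose A B C x0 u a t).symm
  · rintro ⟨p, rfl, z, hzb, rfl⟩
    obtain ⟨hat1, hat2⟩ := hattain z
    set av : ℕ → EuclideanSpace ℝ (Fin l) :=
      fun s => if s < t then WithLp.toLp 2 ((M s)ᵀ *ᵥ (W⁻¹ *ᵥ z)) else 0 with hav
    have havs : ∀ s < t, av s = (M s)ᵀ *ᵥ (W⁻¹ *ᵥ z) := by
      intro s hs
      simp only [hav, if_pos hs]
    have havz : ∀ s, ¬ s < t → av s = 0 := by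
      intro s hs
      simp only [hav, if_neg hs]
    refine ⟨av, ?_, ?_⟩
    · calc (∑ s ∈ Finset.range T, ‖av s‖ ^ 2)
          = ∑ s ∈ Finset.range t, ‖av s‖ ^ 2 := by
            refine (Finset.sum_subset (Finset.range_subset_range.mpr ht) fun s _ hs => ?_).symm
            rw [havz s (by simpa using hs)]
            simp
        _ = ∑ s ∈ Finset.range t, ((M s)ᵀ *ᵥ (W⁻¹ *ᵥ z)) ⬝ᵥ ((M s)ᵀ *ᵥ (W⁻¹ *ᵥ z)) := by
            refine Finset.sum_congr rfl fun s hs => ?_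
            exact (norm_sq_eq_dot _).trans (by rw [havs s (Finset.mem_range.mp hs)])
        _ = z ⬝ᵥ (W⁻¹ *ᵥ z) := hat2
        _ ≤ b := hzb
    · have hz' : (z : Fin n → ℝ) =
          ∑ s ∈ Finset.range t, (transMat A t (s + 1) * C s) *ᵥ (av s) := by
        refine (hat1.symm.trans (Finset.sum_congr rfl fun s hs => ?_))
        rw [havs s (Finset.mem_range.mp hs)]
      apply WithLp.ofLp_injective 2
      rw [WithLp.ofLp_add, hz']
      exact (traj_superpose A B C x0 u av t).symm
end
end

section
/- Consider the discrete-time linear time-varying system x_{t+1} = A_t x_t + B_t u_t + C_t a_t with horizon T, initial set B_δ(θ) for δ > 0 and θ ∈ ℝ^n, and adversary constraint Adv = { a : Σ_{s=0}^{T-1} ‖a_s‖² ≤ b } with budget b ≥ 0. Fix t ∈ {0,…,T} and a control sequence u. If the adversary Gramian W_t = Σ_{s=0}^{t-1} α(t,s+1) C_s C_sᵀ α(t,s+1)ᵀ and the transition matrix α(t,0) are both invertible, then the reachable set at time t decomposes exactly as Reach(B_δ(θ), u, Adv, t) = { ξ(θ, u, 0, t) } ⊕ R_t ⊕ B_t,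 where R_t = { x : xᵀ W_t^{-1} x ≤ b } is the adversary leverage and B_t = { x : xᵀ (α(t,0) α(t,0)ᵀ)^{-1} x ≤ δ² } is the initialization factor. -/
open Finset Matrix Pointwise Metric

noncomputable section

lemma sum_mulVec' {n l : ℕ} (s : Finset ℕ) (M : ℕ → Matrix (Fin n) (Fin l) ℝ) (y : Fin l → ℝ) :
    (∑ i ∈ s, M i) *ᵥ y = ∑ i ∈ s, (M i) *ᵥ y := by
  induction s using Finset.cons_induction with
  | empty => simp
  | cons a s ha ih => rw [Finset.sum_cons, Finset.sum_cons, Matrix.add_mulVec, ih]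

lemma mulVec_sumv {n k : ℕ} (M : Matrix (Fin n) (Fin k) ℝ) (s : Finset ℕ) (v : ℕ → Fin k → ℝ) :
    M *ᵥ (∑ i ∈ s, v i) = ∑ i ∈ s, M *ᵥ (v i) := by
  induction s using Finset.cons_induction with
  | empty => simp
  | cons a s ha ih => rw [Finset.sum_cons, Finset.sum_cons, Matrix.mulVec_add, ih]

lemma sum_dot {k : ℕ} (s : Finset ℕ) (v : ℕ → Fin k → ℝ) (y : Fin k → ℝ) :
    (∑ i ∈ s, v i) ⬝ᵥ y = ∑ i ∈ s, (v i) ⬝ᵥ y := by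
  induction s using Finset.cons_induction with
  | empty => simp
  | cons a s ha ih => rw [Finset.sum_cons, Finset.sum_cons, add_dotProduct, ih]

lemma dot_self_nonneg' {k : ℕ} (x : Fin k → ℝ) : 0 ≤ x ⬝ᵥ x :=
  Finset.sum_nonneg fun _ _ => mul_self_nonneg _

lemma mulVec_dot {p q : ℕ} (N : Matrix (Fin p) (Fin q) ℝ) (v : Fin q → ℝ) (w : Fin p → ℝ) :
    (N *ᵥ v) ⬝ᵥ w = v ⬝ᵥ (Nᵀ *ᵥ w) := by
  rw [dotProduct_comm, Matrix.dotProduct_mulVec, Matrix.mulVec_transpose,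
    dotProduct_comm]

lemma norm_sq_dot {k : ℕ} (x : EuclideanSpace ℝ (Fin k)) : ‖x‖ ^ 2 = x ⬝ᵥ x := by
  rw [EuclideanSpace.norm_eq, Real.sq_sqrt (by positivity)]
  simp [dotProduct, sq]

lemma norm_le_iff_dot {k : ℕ} (d : EuclideanSpace ℝ (Fin k)) (δ : ℝ) (hδ : 0 ≤ δ) :
    ‖d‖ ≤ δ ↔ d ⬝ᵥ d ≤ δ ^ 2 := by
  rw [← norm_sq_dot]
  exact (pow_le_pow_iff_left₀ (norm_nonneg d) hδ two_ne_zero).symm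

lemma traj_formula {n m l : ℕ} (A : ℕ → Matrix (Fin n) (Fin n) ℝ)
    (B : ℕ → Matrix (Fin n) (Fin m) ℝ) (C : ℕ → Matrix (Fin n) (Fin l) ℝ)
    (x0 : EuclideanSpace ℝ (Fin n)) (u : ℕ → EuclideanSpace ℝ (Fin m))
    (a : ℕ → EuclideanSpace ℝ (Fin l)) (t : ℕ) :
    (traj A B C x0 u a t).ofLp = ((transMat A t 0) *ᵥ x0 : Fin n → ℝ)
      + (∑ s ∈ Finset.range t, ((transMat A t (s+1) * B s) *ᵥ (u s) : Fin n → ℝ))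
      + (∑ s ∈ Finset.range t, ((transMat A t (s+1) * C s) *ᵥ (a s) : Fin n → ℝ)) := by
  induction t with
  | zero => show x0.ofLp = _; simp [transMat, Matrix.one_mulVec]
  | succ t ih =>
      show (A t) *ᵥ (traj A B C x0 u a t).ofLp + (B t) *ᵥ (u t).ofLp + (C t) *ᵥ (a t).ofLp = _
      rw [ih]
      have hstep : ∀ s, s < t → transMat A (t+1) (s+1) = A t * transMat A t (s+1) := by
        intro s hs
        show (if t + 1 ≤ s + 1 then 1 else A t * transMat A t (s+1)) = _
        rw [if_neg (by omega)]
      have htt : transMat A (t+1) (t+1) = 1 := by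
        show (if t + 1 ≤ t + 1 then 1 else _) = 1
        rw [if_pos le_rfl]
      have h0 : transMat A (t+1) 0 = A t * transMat A t 0 := by
        show (if t + 1 ≤ 0 then 1 else A t * transMat A t 0) = _
        rw [if_neg (by omega)]
      have hB : (∑ s ∈ Finset.range t, ((transMat A (t+1) (s+1) * B s) *ᵥ u s : Fin n → ℝ))
          = ∑ s ∈ Finset.range t, (A t *ᵥ ((transMat A t (s+1) * B s) *ᵥ u s) : Fin n → ℝ) :=
        Finset.sum_congr rfl fun s hs => by
          rw [hstep s (Finset.mem_range.mp hs), Matrix.mulVec_mulVec, Matrix.mul_assoc]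
      have hC : (∑ s ∈ Finset.range t, ((transMat A (t+1) (s+1) * C s) *ᵥ a s : Fin n → ℝ))
          = ∑ s ∈ Finset.range t, (A t *ᵥ ((transMat A t (s+1) * C s) *ᵥ a s) : Fin n → ℝ) :=
        Finset.sum_congr rfl fun s hs => by
          rw [hstep s (Finset.mem_range.mp hs), Matrix.mulVec_mulVec, Matrix.mul_assoc]
      rw [Finset.sum_range_succ, Finset.sum_range_succ, htt, h0, Matrix.one_mul,
        Matrix.one_mul, hB, hC, Matrix.mulVec_add, Matrix.mulVec_add, Matrix.mulVec_mulVec,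
        mulVec_sumv, mulVec_sumv]
      abel

lemma gram_iff {n l : ℕ} (t : ℕ) (M : ℕ → Matrix (Fin n) (Fin l) ℝ)
    (W : Matrix (Fin n) (Fin n) ℝ) (hW : W = ∑ s ∈ Finset.range t, M s * (M s)ᵀ)
    (hWu : IsUnit W) (b : ℝ) (hb : 0 ≤ b) (x : Fin n → ℝ) :
    x ⬝ᵥ W⁻¹ *ᵥ x ≤ b ↔
      ∃ a : ℕ → Fin l → ℝ, (∑ s ∈ Finset.range t, (a s) ⬝ᵥ (a s)) ≤ b
        ∧ x = ∑ s ∈ Finset.range t, (M s) *ᵥ (a s) := by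
  have hdet : IsUnit W.det := (Matrix.isUnit_iff_isUnit_det W).mp hWu
  have hWW : W * W⁻¹ = 1 := Matrix.mul_nonsing_inv W hdet
  have key : ∀ x : Fin n → ℝ,
      (∑ s ∈ Finset.range t, ((M s)ᵀ *ᵥ (W⁻¹ *ᵥ x)) ⬝ᵥ ((M s)ᵀ *ᵥ (W⁻¹ *ᵥ x)))
        = x ⬝ᵥ W⁻¹ *ᵥ x
      ∧ (∑ s ∈ Finset.range t, (M s) *ᵥ ((M s)ᵀ *ᵥ (W⁻¹ *ᵥ x))) = x := by
    intro x
    set y := W⁻¹ *ᵥ x with hy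
    have hsum : (∑ s ∈ Finset.range t, (M s) *ᵥ ((M s)ᵀ *ᵥ y)) = x := by
      have : ∀ s, (M s) *ᵥ ((M s)ᵀ *ᵥ y) = (M s * (M s)ᵀ) *ᵥ y := fun s =>
        Matrix.mulVec_mulVec y (M s) (M s)ᵀ
      rw [Finset.sum_congr rfl fun s _ => this s, ← sum_mulVec', ← hW, hy,
        Matrix.mulVec_mulVec, hWW, Matrix.one_mulVec]
    constructor
    · calc (∑ s ∈ Finset.range t, ((M s)ᵀ *ᵥ y) ⬝ᵥ ((M s)ᵀ *ᵥ y))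
          = ∑ s ∈ Finset.range t, ((M s) *ᵥ ((M s)ᵀ *ᵥ y)) ⬝ᵥ y := by
            refine Finset.sum_congr rfl fun s _ => ?_
            rw [mulVec_dot, Matrix.transpose_transpose, dotProduct_comm]
        _ = (∑ s ∈ Finset.range t, (M s) *ᵥ ((M s)ᵀ *ᵥ y)) ⬝ᵥ y := (sum_dot _ _ _).symm
        _ = x ⬝ᵥ y := by rw [hsum]
    · exact hsum
  constructor
  · intro hq
    exact ⟨fun s => (M s)ᵀ *ᵥ (W⁻¹ *ᵥ x), by rw [(key x).1]; exact hq, ((key x).2).symm⟩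
  · rintro ⟨a, hab, rfl⟩
    set x := ∑ s ∈ Finset.range t, (M s) *ᵥ (a s) with hx
    set y := W⁻¹ *ᵥ x with hy
    set q : ℝ := x ⬝ᵥ y with hq
    set p : ℕ → Fin l → ℝ := fun s => (M s)ᵀ *ᵥ y with hp
    have h1 : q = ∑ s ∈ Finset.range t, (a s) ⬝ᵥ (p s) := by
      rw [hq, hx, sum_dot]
      exact Finset.sum_congr rfl fun s _ => mulVec_dot _ _ _
    have h2 : (∑ s ∈ Finset.range t, (p s) ⬝ᵥ (p s)) = q := (key x).1
    have hq0 : 0 ≤ q := by rw [← h2]; exact Finset.sum_nonneg fun s _ => dot_self_nonneg' _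
    have hSa : 0 ≤ ∑ s ∈ Finset.range t, (a s) ⬝ᵥ (a s) :=
      Finset.sum_nonneg fun s _ => dot_self_nonneg' _
    have hcs : q ^ 2 ≤ (∑ s ∈ Finset.range t, (a s) ⬝ᵥ (a s)) * q := by
      have hflat : ∀ (v w : ℕ → Fin l → ℝ),
          ∑ z ∈ (Finset.range t) ×ˢ (Finset.univ : Finset (Fin l)), v z.1 z.2 * w z.1 z.2
            = ∑ s ∈ Finset.range t, (v s) ⬝ᵥ (w s) := by
        intro v w; rw [Finset.sum_product]; rfl
      have := Finset.sum_mul_sq_le_sq_mul_sq ((Finset.range t) ×ˢ (Finset.univ : Finset (Fin l)))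
        (fun z => a z.1 z.2) (fun z => p z.1 z.2)
      have e1 : ∑ z ∈ (Finset.range t) ×ˢ (Finset.univ : Finset (Fin l)),
          a z.1 z.2 * p z.1 z.2 = q := by rw [hflat a p, ← h1]
      have e2 : ∑ z ∈ (Finset.range t) ×ˢ (Finset.univ : Finset (Fin l)),
          a z.1 z.2 ^ 2 = ∑ s ∈ Finset.range t, (a s) ⬝ᵥ (a s) := by
        rw [← hflat a a]; exact Finset.sum_congr rfl fun z _ => pow_two _
      have e3 : ∑ z ∈ (Finset.range t) ×ˢ (Finset.univ : Finset (Fin l)),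
          p z.1 z.2 ^ 2 = q := by
        rw [show (∑ z ∈ (Finset.range t) ×ˢ (Finset.univ : Finset (Fin l)), p z.1 z.2 ^ 2)
            = ∑ z ∈ (Finset.range t) ×ˢ (Finset.univ : Finset (Fin l)), p z.1 z.2 * p z.1 z.2
          from Finset.sum_congr rfl fun z _ => pow_two _, hflat p p, h2]
      calc q ^ 2 = (∑ z ∈ (Finset.range t) ×ˢ (Finset.univ : Finset (Fin l)),
              a z.1 z.2 * p z.1 z.2) ^ 2 := by rw [e1]
        _ ≤ (∑ z ∈ (Finset.range t) ×ˢ (Finset.univ : Finset (Fin l)), a z.1 z.2 ^ 2) *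
              (∑ z ∈ (Finset.range t) ×ˢ (Finset.univ : Finset (Fin l)), p z.1 z.2 ^ 2) := this
        _ = (∑ s ∈ Finset.range t, (a s) ⬝ᵥ (a s)) * q := by rw [e2, e3]
    rcases eq_or_lt_of_le hq0 with h | h
    · rw [hq] at h; show q ≤ b; rw [hq, ← h]; exact hb
    · have : q * q ≤ (∑ s ∈ Finset.range t, (a s) ⬝ᵥ (a s)) * q := by nlinarith [hcs]
      have hqle : q ≤ ∑ s ∈ Finset.range t, (a s) ⬝ᵥ (a s) := le_of_mul_le_mul_right this h
      exact hqle.trans hab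

lemma ball_iff {n : ℕ} (α : Matrix (Fin n) (Fin n) ℝ) (hα : IsUnit α) (r : ℝ) (x : Fin n → ℝ) :
    x ⬝ᵥ ((α * αᵀ)⁻¹) *ᵥ x ≤ r ↔ ∃ d : Fin n → ℝ, d ⬝ᵥ d ≤ r ∧ x = α *ᵥ d := by
  have hdet : IsUnit α.det := (Matrix.isUnit_iff_isUnit_det α).mp hα
  have quad : x ⬝ᵥ ((α * αᵀ)⁻¹) *ᵥ x = (α⁻¹ *ᵥ x) ⬝ᵥ (α⁻¹ *ᵥ x) := by
    rw [Matrix.mul_inv_rev, ← Matrix.transpose_nonsing_inv, ← Matrix.mulVec_mulVec,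
      ← mulVec_dot]
  rw [quad]
  constructor
  · intro h
    refine ⟨α⁻¹ *ᵥ x, h, ?_⟩
    rw [Matrix.mulVec_mulVec, Matrix.mul_nonsing_inv α hdet, Matrix.one_mulVec]
  · rintro ⟨d, hd, rfl⟩
    rwa [Matrix.mulVec_mulVec, Matrix.nonsing_inv_mul α hdet, Matrix.one_mulVec]

/-- Exact decomposition of the reachable set at time `t ≤ T` from the initial
ball `B_δ(θ)` under budget-`b` adversaries: it is the nominal adversary-free
state plus the adversary leverage `R_t` plus the initialization factor `B_t`. -/
theorem reach_decomposition {n m l : ℕ} (A : ℕ → Matrix (Fin n) (Fin n) ℝ)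
    (B : ℕ → Matrix (Fin n) (Fin m) ℝ) (C : ℕ → Matrix (Fin n) (Fin l) ℝ)
    (T : ℕ) (δ : ℝ) (hδ : 0 < δ) (θ : EuclideanSpace ℝ (Fin n))
    (b : ℝ) (hb : 0 ≤ b) (t : ℕ) (ht : t ≤ T)
    (u : ℕ → EuclideanSpace ℝ (Fin m))
    (W : Matrix (Fin n) (Fin n) ℝ)
    (hW : W = ∑ s ∈ Finset.range t,
        transMat A t (s + 1) * C s * (C s)ᵀ * (transMat A t (s + 1))ᵀ)
    (hWinv : IsUnit W) (hα : IsUnit (transMat A t 0))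
    (Rt Bt : Set (EuclideanSpace ℝ (Fin n)))
    (hRt : Rt = {x : EuclideanSpace ℝ (Fin n) | x.ofLp ⬝ᵥ (W⁻¹).mulVec x.ofLp ≤ b})
    (hBt : Bt = {x : EuclideanSpace ℝ (Fin n) | x.ofLp ⬝ᵥ ((transMat A t 0 * (transMat A t 0)ᵀ)⁻¹).mulVec x.ofLp ≤ δ ^ 2}) :
    {x : EuclideanSpace ℝ (Fin n) |
        ∃ x0 ∈ Metric.closedBall θ δ, ∃ a : ℕ → EuclideanSpace ℝ (Fin l),
          (∑ s ∈ Finset.range T, ‖a s‖ ^ 2) ≤ b ∧ x = traj A B C x0 u a t} =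
      {traj A B C θ u (fun _ => 0) t} + Rt + Bt := by
  set αM := transMat A t 0 with hαM
  set M : ℕ → Matrix (Fin n) (Fin l) ℝ := fun s => transMat A t (s+1) * C s with hM
  have hW' : W = ∑ s ∈ Finset.range t, M s * (M s)ᵀ := by
    rw [hW]
    exact Finset.sum_congr rfl fun s _ => by
      rw [hM]; rw [Matrix.transpose_mul, ← Matrix.mul_assoc]
  set nom := traj A B C θ u (fun _ => 0) t with hnom
  have hnom' : nom.ofLp = (αM *ᵥ θ : Fin n → ℝ)
      + (∑ s ∈ Finset.range t, ((transMat A t (s+1) * B s) *ᵥ (u s) : Fin n → ℝ)) := by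
    rw [hnom, traj_formula]
    simp only [WithLp.ofLp_zero, Matrix.mulVec_zero, Finset.sum_const_zero, add_zero]
    rfl
  ext x
  simp only [Set.mem_setOf_eq]
  constructor
  · rintro ⟨x0, hx0, a, ha, rfl⟩
    -- the adversary part
    have haT : (∑ s ∈ Finset.range t, (a s) ⬝ᵥ (a s)) ≤ b := by
      refine le_trans ?_ ha
      have : ∀ s, (a s) ⬝ᵥ (a s) = ‖a s‖ ^ 2 := fun s => (norm_sq_dot (a s)).symm
      rw [Finset.sum_congr rfl fun s _ => this s]
      exact Finset.sum_le_sum_of_subset_of_nonneg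
        (Finset.range_subset_range.mpr ht) (fun s _ _ => by positivity)
    set r : EuclideanSpace ℝ (Fin n) := WithLp.toLp 2 (∑ s ∈ Finset.range t, (M s) *ᵥ (a s)) with hrdef
    have hr : r ∈ Rt := by
      rw [hRt]
      exact (gram_iff t M W hW' hWinv b hb r.ofLp).mpr ⟨fun s => (a s).ofLp, haT, rfl⟩
    -- the initialization part
    have hd : ‖(x0 - θ : EuclideanSpace ℝ (Fin n))‖ ≤ δ := by
      rw [← dist_eq_norm]; exact Metric.mem_closedBall.mp hx0
    set w : EuclideanSpace ℝ (Fin n) := WithLp.toLp 2 (αM *ᵥ (x0 - θ)) with hwdef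
    have hs : w ∈ Bt := by
      rw [hBt]
      exact (ball_iff αM hα (δ ^ 2) w.ofLp).mpr
        ⟨(x0 - θ).ofLp, (norm_le_iff_dot _ δ hδ.le).mp hd, rfl⟩
    have hxeq : traj A B C x0 u a t = nom + r + w := by
      apply WithLp.ofLp_injective 2
      rw [WithLp.ofLp_add, WithLp.ofLp_add, traj_formula, hnom', hrdef, hwdef]
      dsimp only
      have : (αM *ᵥ (x0.ofLp - θ.ofLp) : Fin n → ℝ)
          = (αM *ᵥ x0 : Fin n → ℝ) - (αM *ᵥ θ : Fin n → ℝ) :=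
        Matrix.mulVec_sub _ _ _
      rw [this]
      abel
    rw [hxeq]
    exact Set.add_mem_add (Set.add_mem_add rfl hr) hs
  · rintro hx
    rw [Set.mem_add] at hx
    obtain ⟨y, hy, z, hz, hyzx⟩ := hx
    rw [Set.mem_add] at hy
    obtain ⟨nom', hnom'', r, hrRt, hnr⟩ := hy
    rw [Set.mem_singleton_iff] at hnom''
    subst hnom''
    -- adversary
    rw [hRt] at hrRt
    obtain ⟨a', ha', hr'⟩ := (gram_iff t M W hW' hWinv b hb r.ofLp).mp hrRt
    set a : ℕ → EuclideanSpace ℝ (Fin l) := fun s => if s < t then WithLp.toLp 2 (a' s) else 0 with ha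
    have hsum_a : (∑ s ∈ Finset.range T, ‖a s‖ ^ 2) ≤ b := by
      have : (∑ s ∈ Finset.range T, ‖a s‖ ^ 2) = ∑ s ∈ Finset.range t, ‖a s‖ ^ 2 := by
        refine (Finset.sum_subset (Finset.range_subset_range.mpr ht) fun s _ hst => ?_).symm
        have : a s = 0 := by rw [ha]; simp [Finset.mem_range.not.mp hst]
        rw [this]; simp
      rw [this]
      refine le_trans (le_of_eq ?_) ha'
      refine Finset.sum_congr rfl fun s hs => ?_
      have : a s = WithLp.toLp 2 (a' s) := by rw [ha]; simp [Finset.mem_range.mp hs]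
      simp only [this, norm_sq_dot, WithLp.ofLp_toLp]
    have hr_eq : r.ofLp = ∑ s ∈ Finset.range t, ((M s) *ᵥ (a s) : Fin n → ℝ) := by
      rw [hr']
      refine Finset.sum_congr rfl fun s hs => ?_
      have : a s = WithLp.toLp 2 (a' s) := by rw [ha]; simp [Finset.mem_range.mp hs]
      simp only [this, WithLp.ofLp_toLp]
    -- initialization
    rw [hBt] at hz
    obtain ⟨d, hd, hzd⟩ := (ball_iff αM hα (δ ^ 2) z.ofLp).mp hz
    set d' : EuclideanSpace ℝ (Fin n) := WithLp.toLp 2 d with hd'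
    have hx0 : θ + d' ∈ Metric.closedBall θ δ := by
      rw [Metric.mem_closedBall, dist_eq_norm]
      have : θ + d' - θ = d' := by abel
      rw [this]
      exact (norm_le_iff_dot d' δ hδ.le).mpr hd
    refine ⟨θ + d', hx0, a, hsum_a, ?_⟩
    have hmv : (αM *ᵥ (θ.ofLp + d'.ofLp) : Fin n → ℝ)
        = (αM *ᵥ θ : Fin n → ℝ) + (αM *ᵥ d : Fin n → ℝ) :=
      Matrix.mulVec_add _ _ _
    apply WithLp.ofLp_injective 2
    rw [← hyzx, ← hnr, WithLp.ofLp_add, WithLp.ofLp_add, hzd, hr_eq, hnom', traj_formula,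
      WithLp.ofLp_add, hmv]
    abel
end
end

section
/- (Soundness of the synthesis reduction.) Consider the discrete-time linear time-varying system x_{t+1} = A_t x_t + B_t u_t + C_t a_t with horizon T, initial set Init = B_δ(θ), adversary constraint Adv = { a : Σ_{s} ‖a_s‖² ≤ b }, safe sets Safe_t ⊆ ℝ^n for t ∈ {0,…,T}, and goal set Goal ⊆ ℝ^n. For each t let R_t and B_t be sets with Reach(B_δ(θ), u, Adv, t) = { ξ(θ, u, 0, t) } ⊕ R_t ⊕ B_t, and let Safe'_t and Goal' be sets satisfying Safe'_t ⊕ R_t ⊕ B_t ⊆ Safe_t and Goal' ⊕ R_T ⊕ B_T ⊆ Goal. If a control sequence u satisfies ξ(θ, u, 0, t) ∈ Safe'_t for every t ∈ {0,…,T} and ξ(θ, u, 0, T) ∈ Goal', then u solves the adversarial reach-avoid problem: for every initial state x_0 ∈ B_δ(θ) and every adversary input a ∈ Adv, ξ(x_0, u, a, t) ∈ Safe_t for all t ∈ {0,…,T}, and ξ(x_0, u, a, T) ∈ Goal. -/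
open Finset Matrix Pointwise Metric

noncomputable section

/-- Soundness of the synthesis reduction: if the reach sets decompose as
nominal state ⊕ `R_t` ⊕ `B_t`, the strengthened constraints `Safe'_t`, `Goal'`
satisfy `Safe'_t ⊕ R_t ⊕ B_t ⊆ Safe_t` and `Goal' ⊕ R_T ⊕ B_T ⊆ Goal`, and the
adversary-free trajectory from `θ` under `u` satisfies the strengthened
constraints, then `u` solves the adversarial reach-avoid problem. -/
theorem synthesis_sound {n m l : ℕ} (A : ℕ → Matrix (Fin n) (Fin n) ℝ)
    (B : ℕ → Matrix (Fin n) (Fin m) ℝ) (C : ℕ → Matrix (Fin n) (Fin l) ℝ)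
    (T : ℕ) (δ : ℝ) (θ : EuclideanSpace ℝ (Fin n)) (b : ℝ)
    (Safe : ℕ → Set (EuclideanSpace ℝ (Fin n))) (Goal : Set (EuclideanSpace ℝ (Fin n)))
    (Rt Bt : ℕ → Set (EuclideanSpace ℝ (Fin n)))
    (Safe' : ℕ → Set (EuclideanSpace ℝ (Fin n))) (Goal' : Set (EuclideanSpace ℝ (Fin n)))
    (u : ℕ → EuclideanSpace ℝ (Fin m))
    (hdecomp : ∀ t ≤ T,
      {x : EuclideanSpace ℝ (Fin n) |
          ∃ x0 ∈ Metric.closedBall θ δ, ∃ a : ℕ → EuclideanSpace ℝ (Fin l),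
            (∑ s ∈ Finset.range T, ‖a s‖ ^ 2) ≤ b ∧ x = traj A B C x0 u a t} =
        {traj A B C θ u (fun _ => 0) t} + Rt t + Bt t)
    (hSafe' : ∀ t ≤ T, Safe' t + Rt t + Bt t ⊆ Safe t)
    (hGoal' : Goal' + Rt T + Bt T ⊆ Goal)
    (huSafe : ∀ t ≤ T, traj A B C θ u (fun _ => 0) t ∈ Safe' t)
    (huGoal : traj A B C θ u (fun _ => 0) T ∈ Goal') :
    ∀ x0 ∈ Metric.closedBall θ δ,
      ∀ a : ℕ → EuclideanSpace ℝ (Fin l),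
        (∑ s ∈ Finset.range T, ‖a s‖ ^ 2) ≤ b →
          (∀ t ≤ T, traj A B C x0 u a t ∈ Safe t) ∧
            traj A B C x0 u a T ∈ Goal := by
  intro x0 hx0 a ha
  have key : ∀ t ≤ T, traj A B C x0 u a t ∈
      ({traj A B C θ u (fun _ => 0) t} + Rt t + Bt t :
        Set (EuclideanSpace ℝ (Fin n))) := by
    intro t ht
    rw [← hdecomp t ht]
    exact ⟨x0, hx0, a, ha, rfl⟩
  have main : ∀ t ≤ T, ∀ (S' S : Set (EuclideanSpace ℝ (Fin n))),
      S' + Rt t + Bt t ⊆ S → traj A B C θ u (fun _ => 0) t ∈ S' →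
      traj A B C x0 u a t ∈ S := by
    intro t ht S' S hsub hmem
    obtain ⟨y, hy, z, hz, hyz⟩ := key t ht
    obtain ⟨p, hp, r, hr, hpr⟩ := hy
    rw [Set.mem_singleton_iff] at hp
    subst hp
    exact hsub ⟨_, ⟨_, hmem, _, hr, hpr⟩, _, hz, hyz⟩
  exact ⟨fun t ht => main t ht _ _ (hSafe' t ht) (huSafe t ht),
    main T le_rfl _ _ hGoal' huGoal⟩
end
end

section
/- (Exactness of the synthesis reduction for polytopic constraints.) Consider the discrete-time linear time-varying system x_{t+1} = A_t x_t + B_t u_t + C_t a_t with horizon T, initial set B_δ(θ) with δ > 0, and adversary constraint Adv = { a : Σ_{s=0}^{T-1} ‖a_s‖² ≤ b } with b ≥ 0. Fix t ∈ {0,…,T} and a control sequence u, and suppose the Gramian W_t = Σ_{s=0}^{t-1} α(t,s+1) C_s C_sᵀ α(t,s+1)ᵀ and the matrix α(t,0) are invertible. Let P = { x ∈ ℝ^n : ∀ j, c_jᵀ x ≤ b_j } be a polytope, and for each j let m_j = max { c_jᵀ d : d ∈ R_t ⊕ B_t }, where R_t = { x : xᵀ W_t^{-1} x ≤ b } and B_t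 = { x : xᵀ (α(t,0) α(t,0)ᵀ)^{-1} x ≤ δ² }. Then Reach(B_δ(θ), u, Adv, t) ⊆ P if and only if c_jᵀ ξ(θ, u, 0, t) ≤ b_j − m_j for every j. -/
open Finset Matrix Pointwise Metric

noncomputable section

namespace SynthExact

lemma norm_sq_eq_dot {n : ℕ} (v : EuclideanSpace ℝ (Fin n)) : ‖v‖ ^ 2 = v ⬝ᵥ v := by
  rw [EuclideanSpace.norm_eq, Real.sq_sqrt (by positivity)]
  simp [dotProduct, sq]

lemma dot_le_norms {n : ℕ} (v w : EuclideanSpace ℝ (Fin n)) : v ⬝ᵥ w ≤ ‖v‖ * ‖w‖ := by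
  have h : (inner ℝ v w : ℝ) ≤ ‖v‖ * ‖w‖ := real_inner_le_norm v w
  have he : (inner ℝ v w : ℝ) = v ⬝ᵥ w := by
    simp [PiLp.inner_apply, RCLike.inner_apply, dotProduct, mul_comm]
  linarith

lemma mulVec_dot {p q : ℕ} (M : Matrix (Fin p) (Fin q) ℝ) (x : Fin q → ℝ) (y : Fin p → ℝ) :
    (M *ᵥ x) ⬝ᵥ y = x ⬝ᵥ (Mᵀ *ᵥ y) := by
  rw [Matrix.dotProduct_mulVec, Matrix.vecMul_transpose]

lemma sum_mulVec' {p q ι : Type*} [Fintype q] (s : Finset ι) (N : ι → Matrix p q ℝ)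
    (y : q → ℝ) : (∑ i ∈ s, N i) *ᵥ y = ∑ i ∈ s, (N i) *ᵥ y := by
  ext j
  simp [Matrix.mulVec, dotProduct, Matrix.sum_apply, Finset.sum_mul]
  exact Finset.sum_comm

lemma dot_sum {q ι : Type*} [Fintype q] (s : Finset ι) (y : q → ℝ) (f : ι → q → ℝ) :
    y ⬝ᵥ (∑ i ∈ s, f i) = ∑ i ∈ s, y ⬝ᵥ f i := by
  simp [dotProduct, Finset.mul_sum]
  exact Finset.sum_comm

lemma traj_decomp {n m l : ℕ} (A : ℕ → Matrix (Fin n) (Fin n) ℝ)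
    (B : ℕ → Matrix (Fin n) (Fin m) ℝ) (C : ℕ → Matrix (Fin n) (Fin l) ℝ)
    (θ x0 : EuclideanSpace ℝ (Fin n)) (u : ℕ → EuclideanSpace ℝ (Fin m))
    (a : ℕ → EuclideanSpace ℝ (Fin l)) (t : ℕ) :
    traj A B C x0 u a t = (show Fin n → ℝ from
      (show Fin n → ℝ from traj A B C θ u (fun _ => 0) t)
      + (transMat A t 0).mulVec (show Fin n → ℝ from x0 - θ)
      + ∑ s ∈ Finset.range t, (transMat A t (s + 1) * C s).mulVec (a s)) := by
  induction t with
  | zero =>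
      show x0 = (show Fin n → ℝ from (show Fin n → ℝ from θ)
        + (transMat A 0 0).mulVec (show Fin n → ℝ from x0 - θ) + _)
      funext i
      simp [transMat, Matrix.one_mulVec]
  | succ t ih =>
      have h0 : transMat A (t + 1) 0 = A t * transMat A t 0 := by
        simp [transMat]
      have hdiag : transMat A (t + 1) (t + 1) = 1 := by
        simp [transMat]
      have hs : ∀ s ∈ Finset.range t, transMat A (t+1) (s+1) = A t * transMat A t (s+1) := by
        intro s hs
        simp only [Finset.mem_range] at hs
        simp [transMat, Nat.succ_le_succ_iff, Nat.not_le.mpr hs]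
      show (show Fin n → ℝ from (A t).mulVec (traj A B C x0 u a t)
            + (B t).mulVec (u t) + (C t).mulVec (a t))
        = (show Fin n → ℝ from
            (show Fin n → ℝ from (show Fin n → ℝ from (A t).mulVec (traj A B C θ u (fun _ => 0) t)
              + (B t).mulVec (u t) + (C t).mulVec (show Fin l → ℝ from (0 : EuclideanSpace ℝ (Fin l)))))
          + (transMat A (t+1) 0).mulVec (show Fin n → ℝ from x0 - θ)
          + ∑ s ∈ Finset.range (t+1), (transMat A (t+1) (s+1) * C s).mulVec (a s))
      have hsum : (∑ s ∈ Finset.range t, (transMat A (t+1) (s+1) * C s) *ᵥ a s)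
          = (A t) *ᵥ (∑ s ∈ Finset.range t, (transMat A t (s+1) * C s) *ᵥ a s) := by
        rw [← Matrix.mulVecLin_apply, map_sum]
        exact Finset.sum_congr rfl fun s hs' => by
          rw [hs s hs', Matrix.mulVecLin_apply, Matrix.mulVec_mulVec, Matrix.mul_assoc]
      rw [ih, Finset.sum_range_succ, hdiag, h0, hsum]
      show (A t).mulVec ((show Fin n → ℝ from traj A B C θ u (fun _ => 0) t)
          + (transMat A t 0).mulVec (show Fin n → ℝ from x0 - θ)
          + ∑ s ∈ Finset.range t, (transMat A t (s + 1) * C s).mulVec (a s))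
          + (B t).mulVec (u t) + (C t).mulVec (a t) = _
      simp only [Matrix.mulVec_add, Matrix.mulVec_mulVec, WithLp.ofLp_zero, Matrix.mulVec_zero,
        Matrix.one_mulVec, Matrix.one_mul, add_zero]
      abel

section Gramian

variable {n l : ℕ} (t : ℕ) (M : ℕ → Matrix (Fin n) (Fin l) ℝ)
  (W : Matrix (Fin n) (Fin n) ℝ)

lemma gramian_key (hW : W = ∑ s ∈ Finset.range t, M s * (M s)ᵀ) (hWinv : IsUnit W)
    (x : Fin n → ℝ) :
    ∑ s ∈ Finset.range t,
        ‖(WithLp.toLp 2 (((M s)ᵀ).mulVec ((W⁻¹).mulVec x)))‖ ^ 2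
      = x ⬝ᵥ (W⁻¹).mulVec x := by
  have hWd : IsUnit W.det := (Matrix.isUnit_iff_isUnit_det W).mp hWinv
  have hWs : Wᵀ = W := by
    rw [hW, Matrix.transpose_sum]
    exact Finset.sum_congr rfl fun s _ => by
      rw [Matrix.transpose_mul, Matrix.transpose_transpose]
  have hWis : (W⁻¹)ᵀ = W⁻¹ := by rw [Matrix.transpose_nonsing_inv, hWs]
  have h1 : ∀ s, ‖(WithLp.toLp 2 (((M s)ᵀ).mulVec ((W⁻¹).mulVec x)))‖ ^ 2
      = ((W⁻¹).mulVec x) ⬝ᵥ ((M s * (M s)ᵀ) *ᵥ ((W⁻¹).mulVec x)) := by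
    intro s
    rw [norm_sq_eq_dot]
    show ((M s)ᵀ *ᵥ (W⁻¹ *ᵥ x)) ⬝ᵥ ((M s)ᵀ *ᵥ (W⁻¹ *ᵥ x)) = _
    rw [mulVec_dot, Matrix.transpose_transpose, Matrix.mulVec_mulVec]
  calc ∑ s ∈ Finset.range t,
        ‖(WithLp.toLp 2 (((M s)ᵀ).mulVec ((W⁻¹).mulVec x)))‖ ^ 2
      = ∑ s ∈ Finset.range t, ((W⁻¹).mulVec x) ⬝ᵥ ((M s * (M s)ᵀ) *ᵥ ((W⁻¹).mulVec x)) :=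
        Finset.sum_congr rfl fun s _ => h1 s
    _ = ((W⁻¹).mulVec x) ⬝ᵥ (W *ᵥ ((W⁻¹).mulVec x)) := by
        rw [hW, sum_mulVec', dot_sum]
    _ = ((W⁻¹).mulVec x) ⬝ᵥ x := by
        rw [Matrix.mulVec_mulVec, Matrix.mul_nonsing_inv _ hWd, Matrix.one_mulVec]
    _ = x ⬝ᵥ (W⁻¹).mulVec x := by rw [mulVec_dot, hWis]

lemma gramian_le (hW : W = ∑ s ∈ Finset.range t, M s * (M s)ᵀ) (hWinv : IsUnit W)
    (a : ℕ → EuclideanSpace ℝ (Fin l)) (x : Fin n → ℝ)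
    (hx : x = ∑ s ∈ Finset.range t, (M s).mulVec (a s)) :
    x ⬝ᵥ (W⁻¹).mulVec x ≤ ∑ s ∈ Finset.range t, ‖a s‖ ^ 2 := by
  have hkey := gramian_key t M W hW hWinv x
  have hq0 : 0 ≤ x ⬝ᵥ (W⁻¹).mulVec x := by rw [← hkey]; positivity
  have hqsum : x ⬝ᵥ (W⁻¹).mulVec x = ∑ s ∈ Finset.range t,
      (((M s)ᵀ *ᵥ ((W⁻¹).mulVec x)) ⬝ᵥ (a s)) := by
    calc x ⬝ᵥ (W⁻¹).mulVec x = ((W⁻¹).mulVec x) ⬝ᵥ x := dotProduct_comm _ _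
      _ = ((W⁻¹).mulVec x) ⬝ᵥ ∑ s ∈ Finset.range t, (M s).mulVec (a s) := by rw [← hx]
      _ = ∑ s ∈ Finset.range t, ((W⁻¹).mulVec x) ⬝ᵥ (M s).mulVec (a s) := dot_sum _ _ _
      _ = _ := Finset.sum_congr rfl fun s _ =>
          (by rw [mulVec_dot, Matrix.transpose_transpose] :
            ((M s)ᵀ *ᵥ ((W⁻¹).mulVec x)) ⬝ᵥ (a s)
              = ((W⁻¹).mulVec x) ⬝ᵥ (M s).mulVec (a s)).symm
  have hS0 : (0 : ℝ) ≤ ∑ s ∈ Finset.range t, ‖a s‖ ^ 2 := by positivity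
  have hqle : x ⬝ᵥ (W⁻¹).mulVec x ≤ ∑ s ∈ Finset.range t,
      ‖(WithLp.toLp 2 (((M s)ᵀ).mulVec ((W⁻¹).mulVec x)))‖ * ‖a s‖ := by
    rw [hqsum]
    exact Finset.sum_le_sum fun s _ =>
      dot_le_norms (WithLp.toLp 2 (((M s)ᵀ).mulVec ((W⁻¹).mulVec x))) (a s)
  have hcs := Finset.sum_mul_sq_le_sq_mul_sq (Finset.range t)
      (fun s => ‖(WithLp.toLp 2 (((M s)ᵀ).mulVec ((W⁻¹).mulVec x)))‖)
      (fun s => ‖a s‖)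
  nlinarith [hqle, hcs, hq0, hS0, hkey]

lemma gramian_ex (hW : W = ∑ s ∈ Finset.range t, M s * (M s)ᵀ) (hWinv : IsUnit W)
    {b : ℝ} (x : Fin n → ℝ) (hb : x ⬝ᵥ (W⁻¹).mulVec x ≤ b) :
    ∃ a : ℕ → EuclideanSpace ℝ (Fin l), (∀ s, ¬ s < t → a s = 0) ∧
      (∑ s ∈ Finset.range t, ‖a s‖ ^ 2) ≤ b ∧
      (∑ s ∈ Finset.range t, (M s).mulVec (a s)) = x := by
  have hWd : IsUnit W.det := (Matrix.isUnit_iff_isUnit_det W).mp hWinv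
  refine ⟨fun s => if s < t then
      (WithLp.toLp 2 (((M s)ᵀ).mulVec ((W⁻¹).mulVec x))) else 0,
    fun s h => by simp [h], ?_, ?_⟩
  · calc ∑ s ∈ Finset.range t, ‖(if s < t then
          (WithLp.toLp 2 (((M s)ᵀ).mulVec ((W⁻¹).mulVec x))) else 0)‖ ^ 2
        = ∑ s ∈ Finset.range t,
          ‖(WithLp.toLp 2 (((M s)ᵀ).mulVec ((W⁻¹).mulVec x)))‖ ^ 2 := by
          exact Finset.sum_congr rfl fun s hsmem => by
            rw [if_pos (Finset.mem_range.mp hsmem)]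
      _ = x ⬝ᵥ (W⁻¹).mulVec x := gramian_key t M W hW hWinv x
      _ ≤ b := hb
  · calc ∑ s ∈ Finset.range t, (M s).mulVec ((if s < t then
          (WithLp.toLp 2 (((M s)ᵀ).mulVec ((W⁻¹).mulVec x))) else 0 : EuclideanSpace ℝ (Fin l)))
        = ∑ s ∈ Finset.range t, (M s * (M s)ᵀ) *ᵥ ((W⁻¹).mulVec x) := by
          exact Finset.sum_congr rfl fun s hsmem => by
            rw [if_pos (Finset.mem_range.mp hsmem)]
            show (M s) *ᵥ ((M s)ᵀ *ᵥ (W⁻¹ *ᵥ x)) = _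
            rw [Matrix.mulVec_mulVec]
      _ = W *ᵥ ((W⁻¹).mulVec x) := by rw [hW, sum_mulVec']
      _ = x := by rw [Matrix.mulVec_mulVec, Matrix.mul_nonsing_inv _ hWd, Matrix.one_mulVec]

end Gramian

section Ball

variable {n : ℕ} (α : Matrix (Fin n) (Fin n) ℝ)

lemma ball_quad_of (hα : IsUnit α) {δ : ℝ} (v : EuclideanSpace ℝ (Fin n)) (hv : ‖v‖ ≤ δ) :
    (α.mulVec v) ⬝ᵥ ((α * αᵀ)⁻¹).mulVec (α.mulVec v) ≤ δ ^ 2 := by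
  have hαd : IsUnit α.det := (Matrix.isUnit_iff_isUnit_det α).mp hα
  have hαtd : IsUnit αᵀ.det := by rwa [Matrix.det_transpose]
  have h0 : 0 ≤ δ := le_trans (norm_nonneg v) hv
  have key : (α.mulVec v) ⬝ᵥ ((α * αᵀ)⁻¹).mulVec (α.mulVec v) = v ⬝ᵥ v := by
    rw [Matrix.mul_inv_rev, Matrix.mulVec_mulVec, Matrix.mul_assoc,
      Matrix.nonsing_inv_mul _ hαd, Matrix.mul_one, mulVec_dot,
      Matrix.mulVec_mulVec, Matrix.mul_nonsing_inv _ hαtd, Matrix.one_mulVec]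
  rw [key, ← norm_sq_eq_dot]
  exact pow_le_pow_left₀ (norm_nonneg v) hv 2

lemma ball_quad_ex (hα : IsUnit α) {δ : ℝ} (hδ : 0 ≤ δ) (p : EuclideanSpace ℝ (Fin n))
    (hp : p ⬝ᵥ ((α * αᵀ)⁻¹).mulVec p ≤ δ ^ 2) :
    ∃ v : EuclideanSpace ℝ (Fin n), ‖v‖ ≤ δ ∧ α.mulVec v = p := by
  have hαd : IsUnit α.det := (Matrix.isUnit_iff_isUnit_det α).mp hα
  refine ⟨(WithLp.toLp 2 ((α⁻¹).mulVec p)), ?_, ?_⟩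
  · have hnormsq : ‖(WithLp.toLp 2 ((α⁻¹).mulVec p))‖ ^ 2 ≤ δ ^ 2 := by
      rw [norm_sq_eq_dot]
      show ((α⁻¹).mulVec p) ⬝ᵥ ((α⁻¹).mulVec p) ≤ δ ^ 2
      rw [mulVec_dot, Matrix.mulVec_mulVec, Matrix.transpose_nonsing_inv,
        ← Matrix.mul_inv_rev] at *
      exact hp
    nlinarith [norm_nonneg (WithLp.toLp 2 ((α⁻¹).mulVec p))]
  · show α *ᵥ (α⁻¹ *ᵥ p) = p
    rw [Matrix.mulVec_mulVec, Matrix.mul_nonsing_inv _ hαd, Matrix.one_mulVec]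

end Ball

end SynthExact

open SynthExact in
/-- Exactness of the synthesis reduction for polytopic constraints: the
reachable set at time `t ≤ T` is contained in the polytope `P` iff the
adversary-free trajectory satisfies the bounds shifted by the attained maxima
of each linear functional over `R_t ⊕ B_t`. -/
theorem synthesis_exact_polytope {n m l k : ℕ} (A : ℕ → Matrix (Fin n) (Fin n) ℝ)
    (B : ℕ → Matrix (Fin n) (Fin m) ℝ) (C : ℕ → Matrix (Fin n) (Fin l) ℝ)
    (T : ℕ) (δ : ℝ) (hδ : 0 < δ) (θ : EuclideanSpace ℝ (Fin n))
    (b : ℝ) (hb : 0 ≤ b) (t : ℕ) (ht : t ≤ T)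
    (u : ℕ → EuclideanSpace ℝ (Fin m))
    (W : Matrix (Fin n) (Fin n) ℝ)
    (hW : W = ∑ s ∈ Finset.range t,
        transMat A t (s + 1) * C s * (C s)ᵀ * (transMat A t (s + 1))ᵀ)
    (hWinv : IsUnit W) (hα : IsUnit (transMat A t 0))
    (Rt Bt : Set (EuclideanSpace ℝ (Fin n)))
    (hRt : Rt = {x : EuclideanSpace ℝ (Fin n) | x ⬝ᵥ (W⁻¹).mulVec x ≤ b})
    (hBt : Bt = {x : EuclideanSpace ℝ (Fin n) | x ⬝ᵥ ((transMat A t 0 * (transMat A t 0)ᵀ)⁻¹).mulVec x ≤ δ ^ 2})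
    (c : Fin k → EuclideanSpace ℝ (Fin n)) (bnd : Fin k → ℝ)
    (P : Set (EuclideanSpace ℝ (Fin n)))
    (hP : P = {x : EuclideanSpace ℝ (Fin n) | ∀ j, c j ⬝ᵥ x ≤ bnd j})
    (msup : Fin k → ℝ)
    (hmsup : ∀ j, IsGreatest ((fun d : EuclideanSpace ℝ (Fin n) => c j ⬝ᵥ d) '' (Rt + Bt)) (msup j)) :
    {x : EuclideanSpace ℝ (Fin n) |
        ∃ x0 ∈ Metric.closedBall θ δ, ∃ a : ℕ → EuclideanSpace ℝ (Fin l),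
          (∑ s ∈ Finset.range T, ‖a s‖ ^ 2) ≤ b ∧ x = traj A B C x0 u a t} ⊆ P ↔
      ∀ j, c j ⬝ᵥ traj A B C θ u (fun _ => 0) t ≤ bnd j - msup j := by
  set M : ℕ → Matrix (Fin n) (Fin l) ℝ := fun s => transMat A t (s + 1) * C s with hM
  have hWM : W = ∑ s ∈ Finset.range t, M s * (M s)ᵀ := by
    rw [hW]
    exact Finset.sum_congr rfl fun s _ => by
      simp only [hM, Matrix.transpose_mul, Matrix.mul_assoc]
  set ξ : EuclideanSpace ℝ (Fin n) := traj A B C θ u (fun _ => 0) t with hξ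
  constructor
  · -- subset → bounds
    intro hsub j
    obtain ⟨⟨d0, hd0mem, hd0⟩, hub⟩ := hmsup j
    rw [Set.mem_add] at hd0mem
    obtain ⟨r, hr, p, hp, hrp⟩ := hd0mem
    rw [hRt] at hr
    rw [hBt] at hp
    obtain ⟨a, ha0, haS, har⟩ := gramian_ex t M W hWM hWinv (r : Fin n → ℝ) hr
    obtain ⟨v, hv, hvp⟩ := ball_quad_ex (transMat A t 0) hα hδ.le p hp
    set x0 : EuclideanSpace ℝ (Fin n) := θ + v with hx0
    have hx0mem : x0 ∈ Metric.closedBall θ δ := by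
      rw [Metric.mem_closedBall, dist_eq_norm, hx0]
      simpa using hv
    have hbud : (∑ s ∈ Finset.range T, ‖a s‖ ^ 2) ≤ b := by
      have : (∑ s ∈ Finset.range T, ‖a s‖ ^ 2) = ∑ s ∈ Finset.range t, ‖a s‖ ^ 2 := by
        refine (Finset.sum_subset (Finset.range_subset_range.mpr ht) ?_).symm
        intro s _ hsn
        rw [ha0 s (by simpa using hsn)]
        simp
      rw [this]; exact haS
    have hmemL : traj A B C x0 u a t ∈ {x : EuclideanSpace ℝ (Fin n) |
        ∃ x0 ∈ Metric.closedBall θ δ, ∃ a : ℕ → EuclideanSpace ℝ (Fin l),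
          (∑ s ∈ Finset.range T, ‖a s‖ ^ 2) ≤ b ∧ x = traj A B C x0 u a t} :=
      ⟨x0, hx0mem, a, hbud, rfl⟩
    have hPx := hsub hmemL
    rw [hP] at hPx
    have hcx := hPx j
    -- compute c j ⬝ᵥ traj x0 u a t
    have hde := traj_decomp A B C θ x0 u a t
    have hx0θ : (show Fin n → ℝ from x0 - θ) = (v : Fin n → ℝ) := by
      funext i
      show (θ i + v i) - θ i = v i
      ring
    have hval : (c j ⬝ᵥ traj A B C x0 u a t : ℝ) = c j ⬝ᵥ ξ + msup j := by
      rw [hde, hx0θ, hvp]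
      have hsum : (∑ s ∈ Finset.range t, (transMat A t (s + 1) * C s).mulVec (a s))
          = (r : Fin n → ℝ) := har
      rw [hsum]
      have h1 : (c j : Fin n → ℝ) ⬝ᵥ ((show Fin n → ℝ from ξ) + (p : Fin n → ℝ) + (r : Fin n → ℝ))
          = c j ⬝ᵥ ξ + (c j ⬝ᵥ p + c j ⬝ᵥ r) := by
        rw [dotProduct_add, dotProduct_add]
        ring
      rw [h1]
      have h2 : (c j ⬝ᵥ p : ℝ) + c j ⬝ᵥ r = msup j := by
        rw [← hd0, ← hrp]
        show c j ⬝ᵥ p + c j ⬝ᵥ r = c j ⬝ᵥ (r + p)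
        rw [dotProduct_add]
        ring
      rw [h2]
    rw [hval] at hcx
    linarith
  · -- bounds → subset
    intro hj x hx
    obtain ⟨x0, hx0, a, hab, hxe⟩ := hx
    rw [hP]
    intro j
    set r : EuclideanSpace ℝ (Fin n) :=
      (WithLp.toLp 2 (∑ s ∈ Finset.range t, (M s).mulVec (a s))) with hr
    set p : EuclideanSpace ℝ (Fin n) :=
      (WithLp.toLp 2 ((transMat A t 0).mulVec (show Fin n → ℝ from x0 - θ)))
      with hpdef
    have hrmem : r ∈ Rt := by
      rw [hRt]
      have h1 := gramian_le t M W hWM hWinv a (r : Fin n → ℝ) rfl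
      have h2 : (∑ s ∈ Finset.range t, ‖a s‖ ^ 2) ≤ b := by
        refine le_trans ?_ hab
        exact Finset.sum_le_sum_of_subset_of_nonneg (Finset.range_subset_range.mpr ht)
          (fun s _ _ => by positivity)
      exact le_trans h1 h2
    have hpmem : p ∈ Bt := by
      rw [hBt]
      have hvn : ‖(WithLp.toLp 2 (show Fin n → ℝ from x0 - θ))‖ ≤ δ := by
        have : x0 - θ = (WithLp.toLp 2 (show Fin n → ℝ from x0 - θ)) := rfl
        rw [← this]
        rw [Metric.mem_closedBall, dist_eq_norm] at hx0
        exact hx0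
      exact ball_quad_of (transMat A t 0) hα _ hvn
    have hsum_mem : r + p ∈ Rt + Bt := Set.add_mem_add hrmem hpmem
    have hle : (c j ⬝ᵥ (r + p) : ℝ) ≤ msup j := (hmsup j).2 ⟨r + p, hsum_mem, rfl⟩
    have hsplit : (c j ⬝ᵥ (r + p) : ℝ) = c j ⬝ᵥ r + c j ⬝ᵥ p := by
      show c j ⬝ᵥ ((show Fin n → ℝ from r) + (show Fin n → ℝ from p)) = _
      rw [dotProduct_add]
    have hval : (c j ⬝ᵥ x : ℝ) = c j ⬝ᵥ ξ + (c j ⬝ᵥ p + c j ⬝ᵥ r) := by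
      rw [hxe, traj_decomp A B C θ x0 u a t]
      rw [show (∑ s ∈ Finset.range t, (transMat A t (s + 1) * C s).mulVec (a s))
        = (show Fin n → ℝ from r) from rfl]
      rw [show ((transMat A t 0).mulVec (show Fin n → ℝ from x0 - θ))
        = (show Fin n → ℝ from p) from rfl]
      rw [dotProduct_add, dotProduct_add]
      ring
    have := hj j
    rw [hval]
    rw [hsplit] at hle
    linarith
end
end

section
/- (Reach-set decomposition over covers.) Consider the discrete-time linear time-varying system x_{t+1} = A_t x_t + B_t u_t + C_t a_t with horizon T. Let {θ_i}_{i∈I} be finitely many points of ℝ^n and {a_j}_{j∈J} finitely many adversary sequences, and let ε > 0. Fix t ∈ {0,…,T} and a control sequence u, and suppose the Gramian W_t = Σ_{s=0}^{t-1} α(t,s+1) C_s C_sᵀ α(t,s+1)ᵀ and the matrix α(t,0) are invertible. Then { ξ(x_0, u, a, t) : x_0 ∈ ⋃_{i∈I} B_ε(θ_i), a ∈ ⋃_{j∈J} B_ε(a_j) } = ( ⋃_{i∈I} ⋃_{j∈J} { ξ(θ_i, u, a_j, t) } ) ⊕ R_t ⊕ B_t, where R_t = { x : xᵀ W_t^{-1}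 x ≤ ε² }, B_t = { x : xᵀ (α(t,0) α(t,0)ᵀ)^{-1} x ≤ ε² }, and B_ε(a_j) denotes the ℓ²-ball { a : Σ_{s=0}^{T-1} ‖a_s − (a_j)_s‖² ≤ ε² } of adversary sequences. -/
open Finset Matrix Pointwise Metric

noncomputable section

def ofE {n : ℕ} (x : EuclideanSpace ℝ (Fin n)) : Fin n → ℝ := x.ofLp
def toE {n : ℕ} (v : Fin n → ℝ) : EuclideanSpace ℝ (Fin n) := WithLp.toLp 2 v

lemma dot_self_eq {κ : Type*} [Fintype κ] (v : κ → ℝ) : v ⬝ᵥ v = ∑ i, v i ^ 2 :=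
  Finset.sum_congr rfl fun i _ => (pow_two (v i)).symm

lemma norm_sq_eq' {k : ℕ} (w : EuclideanSpace ℝ (Fin k)) : ‖w‖ ^ 2 = ∑ i, w i ^ 2 := by
  rw [EuclideanSpace.norm_eq, Real.sq_sqrt (Finset.sum_nonneg fun _ _ => sq_nonneg _)]
  simp [Real.norm_eq_abs, sq_abs]

lemma ellipsoid_eq {n : ℕ} {ι : Type*} [Fintype ι]
    (L : Matrix (Fin n) ι ℝ) (hM : IsUnit (L * Lᵀ)) (ε : ℝ) :
    {x : EuclideanSpace ℝ (Fin n) | x ⬝ᵥ ((L * Lᵀ)⁻¹).mulVec x ≤ ε ^ 2} =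
      {x : EuclideanSpace ℝ (Fin n) | ∃ d : ι → ℝ, d ⬝ᵥ d ≤ ε ^ 2 ∧ x = L.mulVec d} := by
  set M := L * Lᵀ with hMdef
  have hdet : IsUnit M.det := (Matrix.isUnit_iff_isUnit_det M).mp hM
  have hMMinv : M * M⁻¹ = 1 := Matrix.mul_nonsing_inv M hdet
  have hMinvM : M⁻¹ * M = 1 := Matrix.nonsing_inv_mul M hdet
  have hMsymm : Mᵀ = M := by simp [hMdef, Matrix.transpose_mul]
  have hMinvsymm : (M⁻¹)ᵀ = M⁻¹ := by rw [Matrix.transpose_nonsing_inv, hMsymm]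
  have hLL : ∀ Z : Matrix (Fin n) ι ℝ, L * (Lᵀ * Z) = M * Z := fun Z => by
    rw [← Matrix.mul_assoc, ← hMdef]
  have hMM : ∀ Z : Matrix (Fin n) ι ℝ, M⁻¹ * (M * Z) = Z := fun Z => by
    rw [← Matrix.mul_assoc, hMinvM, Matrix.one_mul]
  ext x
  simp only [Set.mem_setOf_eq]
  constructor
  · intro hx
    set y := M⁻¹.mulVec x with hy
    refine ⟨Lᵀ.mulVec y, ?_, ?_⟩
    · have h1 : Lᵀ.mulVec y ⬝ᵥ Lᵀ.mulVec y = x ⬝ᵥ y := by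
        rw [Matrix.dotProduct_mulVec, Matrix.vecMul_transpose, Matrix.mulVec_mulVec, ← hMdef,
          hy, Matrix.mulVec_mulVec, hMMinv, Matrix.one_mulVec]
      rw [h1]; exact hx
    · rw [Matrix.mulVec_mulVec, ← hMdef, hy, Matrix.mulVec_mulVec, hMMinv, Matrix.one_mulVec]
  · rintro ⟨d, hd, hxd⟩
    rw [hxd]
    set P := Lᵀ * (M⁻¹ * L) with hP
    have hPsymm : Pᵀ = P := by
      simp only [hP, Matrix.transpose_mul, Matrix.transpose_transpose, hMinvsymm]
      rw [Matrix.mul_assoc]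
    have hPP : P * P = P := by
      simp only [hP, Matrix.mul_assoc, hLL, hMM]
    have hvm : ∀ w : ι → ℝ, w ᵥ* P = P.mulVec w := fun w => by
      conv_lhs => rw [← hPsymm]
      rw [Matrix.vecMul_transpose]
    have key : L.mulVec d ⬝ᵥ M⁻¹.mulVec (L.mulVec d) = P.mulVec d ⬝ᵥ d := by
      rw [Matrix.mulVec_mulVec, Matrix.dotProduct_mulVec, ← Matrix.vecMul_transpose,
        Matrix.vecMul_vecMul, ← hP, hvm]
    rw [key]
    set q := P.mulVec d with hq
    have hqq : q ⬝ᵥ q = q ⬝ᵥ d := by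
      nth_rewrite 2 [hq]
      rw [Matrix.dotProduct_mulVec, hvm, hq, Matrix.mulVec_mulVec, hPP]
    have hnn : 0 ≤ (d - q) ⬝ᵥ (d - q) := Finset.sum_nonneg fun i _ => mul_self_nonneg _
    have hexp : (d - q) ⬝ᵥ (d - q) = d ⬝ᵥ d - q ⬝ᵥ d := by
      rw [sub_dotProduct, dotProduct_sub, dotProduct_sub, hqq,
        dotProduct_comm d q]
      ring
    rw [hexp] at hnn
    linarith

lemma transMat_succ {n : ℕ} (A : ℕ → Matrix (Fin n) (Fin n) ℝ) {t t0 : ℕ} (h : t0 ≤ t) :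
    transMat A (t + 1) t0 = A t * transMat A t t0 := by
  have h' : ¬ (t + 1 ≤ t0) := by omega
  simp [transMat, h']

lemma transMat_self {n : ℕ} (A : ℕ → Matrix (Fin n) (Fin n) ℝ) (t : ℕ) :
    transMat A t t = 1 := by
  cases t with
  | zero => rfl
  | succ t => simp [transMat]

lemma traj_sub {n m l : ℕ} (A : ℕ → Matrix (Fin n) (Fin n) ℝ)
    (B : ℕ → Matrix (Fin n) (Fin m) ℝ) (C : ℕ → Matrix (Fin n) (Fin l) ℝ)
    (u : ℕ → EuclideanSpace ℝ (Fin m)) (x0 θ0 : EuclideanSpace ℝ (Fin n))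
    (a a' : ℕ → EuclideanSpace ℝ (Fin l)) (t : ℕ) :
    ofE (traj A B C x0 u a t) =
      ofE (traj A B C θ0 u a' t)
      + (transMat A t 0).mulVec (fun i => x0 i - θ0 i)
      + ∑ s ∈ Finset.range t,
          (transMat A t (s + 1) * C s).mulVec (fun k => a s k - a' s k) := by
  induction t with
  | zero =>
      simp only [Finset.range_zero, Finset.sum_empty, add_zero]
      funext i
      show x0 i = θ0 i + ((1 : Matrix (Fin n) (Fin n) ℝ).mulVec (fun i => x0 i - θ0 i)) i
      rw [Matrix.one_mulVec]
      ring
  | succ t ih =>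
      have hstep : ofE (traj A B C x0 u a (t + 1)) =
          (A t).mulVec (traj A B C x0 u a t) + (B t).mulVec (u t) + (C t).mulVec (a t) := rfl
      have hstep' : ofE (traj A B C θ0 u a' (t + 1)) =
          (A t).mulVec (traj A B C θ0 u a' t) + (B t).mulVec (u t) + (C t).mulVec (a' t) := rfl
      have ih' := ih
      unfold ofE at ih'
      rw [hstep, hstep', ih', Finset.sum_range_succ, transMat_self, Matrix.one_mul,
        Matrix.mulVec_add, Matrix.mulVec_add, Matrix.mulVec_mulVec,
        ← transMat_succ A (Nat.zero_le t)]
      have hsum : (A t).mulVec (∑ s ∈ Finset.range t,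
            (transMat A t (s + 1) * C s).mulVec (fun k => a s k - a' s k))
          = ∑ s ∈ Finset.range t,
            (transMat A (t + 1) (s + 1) * C s).mulVec (fun k => a s k - a' s k) := by
        rw [← Matrix.mulVecLin_apply, map_sum]
        refine Finset.sum_congr rfl fun s hs => ?_
        rw [Matrix.mulVecLin_apply, Matrix.mulVec_mulVec, ← Matrix.mul_assoc,
          ← transMat_succ A (Nat.succ_le_of_lt (Finset.mem_range.mp hs))]
      rw [hsum]
      have hC : (C t).mulVec (fun k => a t k - a' t k) =
          (C t).mulVec (a t) - (C t).mulVec (a' t) := by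
        rw [← Matrix.mulVec_sub]
        rfl
      rw [hC]
      abel

lemma bridge {n l : ℕ} (t : ℕ) (G : ℕ → Matrix (Fin n) (Fin l) ℝ) (e : ℕ → Fin l → ℝ) :
    ∑ s ∈ Finset.range t, (G s).mulVec (e s)
      = (Matrix.of fun i (p : Fin t × Fin l) => G p.1 i p.2).mulVec
          (fun p : Fin t × Fin l => e p.1 p.2) := by
  funext i
  rw [Finset.sum_apply]
  show ∑ s ∈ Finset.range t, (G s).mulVec (e s) i = _
  simp only [Matrix.mulVec, dotProduct, Matrix.of_apply]
  rw [← Fin.sum_univ_eq_sum_range (fun s => ∑ k, G s i k * e s k) t, Fintype.sum_prod_type]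

/-- Reach-set decomposition over covers: the reachable set at time `t ≤ T`
from a finite union of `ε`-balls of initial states and a finite union of
`ε`-balls of adversary sequences equals the union of the nominal states
`ξ(θ_i, u, a_j, t)` plus the adversary leverage `R_t` plus the initialization
factor `B_t`. -/
theorem reach_decomposition_cover {n m l : ℕ} {I J : Type*} [Fintype I] [Fintype J]
    (A : ℕ → Matrix (Fin n) (Fin n) ℝ)
    (B : ℕ → Matrix (Fin n) (Fin m) ℝ) (C : ℕ → Matrix (Fin n) (Fin l) ℝ)
    (T : ℕ) (t : ℕ) (ht : t ≤ T)
    (θ : I → EuclideanSpace ℝ (Fin n))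
    (aj : J → ℕ → EuclideanSpace ℝ (Fin l))
    (ε : ℝ) (hε : 0 < ε)
    (u : ℕ → EuclideanSpace ℝ (Fin m))
    (W : Matrix (Fin n) (Fin n) ℝ)
    (hW : W = ∑ s ∈ Finset.range t,
        transMat A t (s + 1) * C s * (C s)ᵀ * (transMat A t (s + 1))ᵀ)
    (hWinv : IsUnit W) (hα : IsUnit (transMat A t 0))
    (Rt Bt : Set (EuclideanSpace ℝ (Fin n)))
    (hRt : Rt = {x : EuclideanSpace ℝ (Fin n) | x.ofLp ⬝ᵥ (W⁻¹).mulVec x.ofLp ≤ ε ^ 2})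
    (hBt : Bt = {x : EuclideanSpace ℝ (Fin n) | x.ofLp ⬝ᵥ ((transMat A t 0 * (transMat A t 0)ᵀ)⁻¹).mulVec x.ofLp ≤ ε ^ 2}) :
    {x : EuclideanSpace ℝ (Fin n) |
        ∃ x0 ∈ ⋃ i : I, Metric.closedBall (θ i) ε,
          ∃ a : ℕ → EuclideanSpace ℝ (Fin l),
            (∃ j : J, (∑ s ∈ Finset.range T, ‖a s - aj j s‖ ^ 2) ≤ ε ^ 2) ∧
            x = traj A B C x0 u a t} =
      (⋃ i : I, ⋃ j : J, {traj A B C (θ i) u (aj j) t}) + Rt + Bt := by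
  classical
  set L : Matrix (Fin n) (Fin t × Fin l) ℝ :=
    Matrix.of fun i (p : Fin t × Fin l) => (transMat A t (↑p.1 + 1) * C ↑p.1) i p.2 with hLdef
  have hLW : L * Lᵀ = W := by
    rw [hW]
    ext i j
    rw [Matrix.mul_apply, Matrix.sum_apply,
      ← Fin.sum_univ_eq_sum_range
        (fun s => (transMat A t (s + 1) * C s * (C s)ᵀ * (transMat A t (s + 1))ᵀ) i j) t,
      Fintype.sum_prod_type]
    refine Finset.sum_congr rfl fun s _ => ?_
    have hGG : transMat A t (↑s + 1) * C ↑s * (C ↑s)ᵀ * (transMat A t (↑s + 1))ᵀ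
        = (transMat A t (↑s + 1) * C ↑s) * (transMat A t (↑s + 1) * C ↑s)ᵀ := by
      rw [Matrix.transpose_mul, ← Matrix.mul_assoc]
    rw [hGG, Matrix.mul_apply]
    simp [hLdef, Matrix.transpose_apply]
  have hWunit' : IsUnit (L * Lᵀ) := by rw [hLW]; exact hWinv
  have hRt' : Rt = {x : EuclideanSpace ℝ (Fin n) |
      ∃ d : Fin t × Fin l → ℝ, d ⬝ᵥ d ≤ ε ^ 2 ∧ x = L.mulVec d} := by
    rw [hRt, ← hLW]
    exact ellipsoid_eq L hWunit' ε
  have hαT : IsUnit (transMat A t 0 * (transMat A t 0)ᵀ) := by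
    refine hα.mul ?_
    rw [Matrix.isUnit_iff_isUnit_det, Matrix.det_transpose, ← Matrix.isUnit_iff_isUnit_det]
    exact hα
  have hBt' : Bt = {x : EuclideanSpace ℝ (Fin n) |
      ∃ v : Fin n → ℝ, v ⬝ᵥ v ≤ ε ^ 2 ∧ x = (transMat A t 0).mulVec v} := by
    rw [hBt]
    exact ellipsoid_eq (transMat A t 0) hαT ε
  ext x
  simp only [Set.mem_setOf_eq]
  constructor
  · rintro ⟨x0, hx0, a, ⟨j, henergy⟩, rfl⟩
    rw [Set.mem_iUnion] at hx0
    obtain ⟨i0, hball⟩ := hx0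
    set d : Fin t × Fin l → ℝ := fun p => a p.1 p.2 - aj j p.1 p.2 with hd
    set v : Fin n → ℝ := fun i => x0 i - θ i0 i with hv
    have hS : traj A B C (θ i0) u (aj j) t ∈
        ⋃ i : I, ⋃ j' : J, ({traj A B C (θ i) u (aj j') t} : Set (EuclideanSpace ℝ (Fin n))) :=
      Set.mem_iUnion.2 ⟨i0, Set.mem_iUnion.2 ⟨j, rfl⟩⟩
    have hrmem : toE (L.mulVec d) ∈ Rt := by
      rw [hRt']
      refine ⟨d, ?_, rfl⟩
      have h2 : d ⬝ᵥ d = ∑ s ∈ Finset.range t, ‖a s - aj j s‖ ^ 2 := by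
        rw [← Fin.sum_univ_eq_sum_range (fun s => ‖a s - aj j s‖ ^ 2) t]
        show ∑ p : Fin t × Fin l, d p * d p = _
        rw [Fintype.sum_prod_type]
        refine Finset.sum_congr rfl fun s _ => ?_
        rw [norm_sq_eq']
        refine Finset.sum_congr rfl fun k _ => ?_
        have hsubap : (a ↑s - aj j ↑s) k = a ↑s k - aj j ↑s k := rfl
        rw [hsubap]
        show d (s, k) * d (s, k) = _
        rw [hd]
        ring
      rw [h2]
      refine le_trans (Finset.sum_le_sum_of_subset_of_nonneg
        (Finset.range_subset_range.mpr ht) fun _ _ _ => sq_nonneg _) henergy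
    have hbmem : toE ((transMat A t 0).mulVec v) ∈ Bt := by
      rw [hBt']
      refine ⟨v, ?_, rfl⟩
      have h3 : v ⬝ᵥ v = ‖x0 - θ i0‖ ^ 2 := by
        rw [norm_sq_eq']
        refine Finset.sum_congr rfl fun i _ => ?_
        have : (x0 - θ i0) i = x0 i - θ i0 i := rfl
        rw [this]
        show v i * v i = _
        rw [hv]
        ring
      rw [h3]
      have hdist : ‖x0 - θ i0‖ ≤ ε := by
        rw [← dist_eq_norm]
        exact Metric.mem_closedBall.mp hball
      exact pow_le_pow_left₀ (norm_nonneg _) hdist 2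
    have hkey : ofE (traj A B C x0 u a t) =
        ofE (traj A B C (θ i0) u (aj j) t) + L.mulVec d + (transMat A t 0).mulVec v := by
      have h1 := traj_sub A B C u x0 (θ i0) a (aj j) t
      rw [bridge t (fun s => transMat A t (s + 1) * C s) (fun s k => a s k - aj j s k)] at h1
      rw [h1, ← hd, ← hv]
      abel
    have hfinal : traj A B C x0 u a t =
        traj A B C (θ i0) u (aj j) t + toE (L.mulVec d) + toE ((transMat A t 0).mulVec v) :=
      WithLp.ofLp_injective (p := 2) hkey
    rw [hfinal]
    exact Set.add_mem_add (Set.add_mem_add hS hrmem) hbmem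
  · intro hx
    rw [Set.mem_add] at hx
    obtain ⟨y, hy, b, hb, hyb⟩ := hx
    rw [Set.mem_add] at hy
    obtain ⟨p, hp, r, hr, hpr⟩ := hy
    simp only [Set.mem_iUnion, Set.mem_singleton_iff] at hp
    obtain ⟨i0, j, rfl⟩ := hp
    rw [hRt'] at hr
    obtain ⟨d, hdle, hrd⟩ := hr
    have hr' : r = toE (L.mulVec d) := WithLp.ofLp_injective (p := 2) hrd
    subst hr'
    rw [hBt'] at hb
    obtain ⟨v, hvle, hbv⟩ := hb
    have hb' : b = toE ((transMat A t 0).mulVec v) := WithLp.ofLp_injective (p := 2) hbv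
    subst hb'
    subst hpr
    subst hyb
    set a : ℕ → EuclideanSpace ℝ (Fin l) :=
      fun s => if h : s < t then aj j s + toE (fun k => d (⟨s, h⟩, k)) else aj j s with ha
    refine ⟨θ i0 + toE v, ?_, a, ⟨j, ?_⟩, ?_⟩
    · rw [Set.mem_iUnion]
      refine ⟨i0, ?_⟩
      rw [Metric.mem_closedBall, dist_eq_norm]
      have hsub : θ i0 + toE v - θ i0 = toE v := by abel
      rw [hsub]
      have h1 : ‖toE v‖ ^ 2 ≤ ε ^ 2 := by
        rw [norm_sq_eq']
        rw [← dot_self_eq]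
        exact hvle
      exact le_of_pow_le_pow_left₀ two_ne_zero hε.le h1
    · have hvanish : ∀ s ∈ Finset.range T, s ∉ Finset.range t → ‖a s - aj j s‖ ^ 2 = 0 := by
        intro s _ hs
        have hst : ¬ s < t := fun h => hs (Finset.mem_range.mpr h)
        have : a s = aj j s := by rw [ha]; simp [hst]
        rw [this, sub_self]
        simp
      rw [← Finset.sum_subset (Finset.range_subset_range.mpr ht) hvanish]
      rw [← Fin.sum_univ_eq_sum_range (fun s => ‖a s - aj j s‖ ^ 2) t]
      have hterm : ∀ s : Fin t, ‖a ↑s - aj j ↑s‖ ^ 2 = ∑ k, d (s, k) ^ 2 := by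
        intro s
        have has : a ↑s = aj j ↑s + toE (fun k => d (⟨↑s, s.isLt⟩, k)) := by
          rw [ha]; simp [s.isLt]
        have hsub2 : a ↑s - aj j ↑s = toE (fun k => d (⟨↑s, s.isLt⟩, k)) := by
          rw [has]; abel
        rw [hsub2, norm_sq_eq']
        refine Finset.sum_congr rfl fun k _ => ?_
        show d (⟨↑s, s.isLt⟩, k) ^ 2 = d (s, k) ^ 2
        rw [Fin.eta]
      rw [Finset.sum_congr rfl fun s _ => hterm s]
      refine le_trans (le_of_eq ?_) hdle
      rw [dot_self_eq, Fintype.sum_prod_type]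
    · -- traj ... + L.mulVec d + (transMat A t 0).mulVec v = traj (θ i0 + toE v) u a t
      have h1 := traj_sub A B C u (θ i0 + toE v) (θ i0) a (aj j) t
      have hveq : (fun i => (θ i0 + toE v) i - θ i0 i) = v := by
        funext i
        show θ i0 i + v i - θ i0 i = v i
        ring
      rw [bridge t (fun s => transMat A t (s + 1) * C s) (fun s k => a s k - aj j s k),
        hveq] at h1
      have hdeq : (fun p : Fin t × Fin l => a ↑p.1 p.2 - aj j ↑p.1 p.2) = d := by
        funext p
        obtain ⟨s, k⟩ := p
        have has : a ↑s = aj j ↑s + toE (fun k => d (⟨↑s, s.isLt⟩, k)) := by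
          rw [ha]; simp [s.isLt]
        show a ↑s k - aj j ↑s k = d (s, k)
        rw [has]
        show aj j ↑s k + d (⟨↑s, s.isLt⟩, k) - aj j ↑s k = d (s, k)
        rw [Fin.eta]
        ring
      rw [hdeq] at h1
      have h2 : ofE (traj A B C (θ i0) u (aj j) t) + L.mulVec d
          + (transMat A t 0).mulVec v = ofE (traj A B C (θ i0 + toE v) u a t) := by
        rw [h1]; abel
      exact WithLp.ofLp_injective (p := 2) h2
end
end
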